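/- Let ρ be a probability measure on a measurable space 𝒳, let 𝒫 be a type of paths, let N ≥ 1 and let P⁽¹⁾,…,P⁽ᴺ⁾ ∈ 𝒫 be single-algorithm baseline paths. Let C : 𝒳 → Finset 𝒫 assign to each context a finite candidate set with at least two elements containing all of P⁽¹⁾,…,P⁽ᴺ⁾, and let μ : 𝒫 × 𝒳 → ℝ with 0 ≤ μ(P,x) ≤ 1 and x ↦ μ(P⁽ⁱ⁾,x) measurable for each i. Let f : 𝒫 × 𝒳 → ℝ and ε ≥ 0 satisfy |f(P,x) − μ(P,x)| ≤ ε for all x and all P ∈ C(x), with 2ε ≤ 1. For each x, let P̂(x) ∈ C(x) maximize f(·,x) over C(x), and let g(x) be the difference between the largest and second-largest (with multiplicity) values of {μ(P,x) : P ∈ C(x)}. Let i† ∈ {1,…,N} attain the maximum of i ↦ ∫ μ(P⁽ⁱ⁾,x) dρ(x). Assume: (i) x ↦ μ(P̂(x),x), x ↦ max_{P∈C(x)} μ(P,x), and g are measurable, and ρ{x : g(x) ≤ t} ≤ c₀·t^α for all t ∈ [0,1], with c₀ > 0, α > 0; (ii) there exist a measurable set 𝒮 with ρ(𝒮) ≥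 p, p ∈ (0,1], and γ > 0 such that max_{P∈C(x)} μ(P,x) ≥ μ(P⁽ⁱ†⁾,x) + γ for all x ∈ 𝒮; and (iii) ε < (p·γ / (2^{α+1}·c₀))^{1/(α+1)}. Then ∫ μ(P̂(x),x) dρ(x) > max over i ∈ {1,…,N} of ∫ μ(P⁽ⁱ⁾,x) dρ(x). -/

import Mathlib

open MeasureTheory

/-- `IsTopTwoGap S v g` says `g` is the difference between the largest and
second-largest (counted with multiplicity) values of `v` on the finite set `S`:
there is a maximizer `P₁` of `v` on `S`, `S.erase P₁` is nonempty, and `g` is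
the difference between `v P₁` and the maximum of `v` over `S.erase P₁`. -/
def IsTopTwoGap {Path : Type*} [DecidableEq Path] (S : Finset Path) (v : Path → ℝ) (g : ℝ) : Prop :=
  ∃ P₁ ∈ S, (∀ Q ∈ S, v Q ≤ v P₁) ∧
    ∃ h : (S.erase P₁).Nonempty, g = v P₁ - (S.erase P₁).sup' h v

/-- Theorem 2 (strict improvement over the best single algorithm): under the
uniform score-accuracy bound `ε` with `2ε ≤ 1`, the Tsybakov/no-tie condition
`ρ{g ≤ t} ≤ c₀ t^α` on the candidate-set gap `g`, suboptimality of the best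
single-algorithm baseline `Pb idag` (the maximizer of the expected performance
among `Pb 1, …, Pb N`) by margin `γ` on a set of measure at least `p`, and
`ε < (pγ / (2^{α+1} c₀))^{1/(α+1)}`, the learned selection rule `Phat` strictly
improves over `max_i ∫ μ(Pb i) dρ` in expected performance. -/
theorem stmt_7 {𝒳 : Type*} [MeasurableSpace 𝒳] (ρ : Measure 𝒳) [IsProbabilityMeasure ρ]
    {Path : Type*} [DecidableEq Path] (N : ℕ) (hN : 1 ≤ N) (Pb : Fin N → Path)
    (C : 𝒳 → Finset Path)
    (hcard : ∀ x, 2 ≤ (C x).card) (hbmem : ∀ x i, Pb i ∈ C x)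
    (μ f : Path → 𝒳 → ℝ) (hμ : ∀ P x, 0 ≤ μ P x ∧ μ P x ≤ 1)
    (hmb : ∀ i, Measurable fun x => μ (Pb i) x)
    (ε : ℝ) (hε : 0 ≤ ε) (hε1 : 2 * ε ≤ 1)
    (herr : ∀ x, ∀ P ∈ C x, |f P x - μ P x| ≤ ε)
    (Phat : 𝒳 → Path) (hPhatMem : ∀ x, Phat x ∈ C x)
    (hPhatMax : ∀ x, ∀ Q ∈ C x, f Q x ≤ f (Phat x) x)
    (M g : 𝒳 → ℝ)
    (hM : ∀ x, M x = (C x).sup'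
      (Finset.card_pos.mp (by have := hcard x; omega)) (fun P => μ P x))
    (hg : ∀ x, IsTopTwoGap (C x) (fun P => μ P x) (g x))
    (hmPhat : Measurable fun x => μ (Phat x) x)
    (hmM : Measurable M) (hmg : Measurable g)
    (c₀ α : ℝ) (hc₀ : 0 < c₀) (hα : 0 < α)
    (htsy : ∀ t ∈ Set.Icc (0:ℝ) 1, ρ {x | g x ≤ t} ≤ ENNReal.ofReal (c₀ * t ^ α))
    (idag : Fin N)
    (hidag : ∀ i, ∫ x, μ (Pb i) x ∂ρ ≤ ∫ x, μ (Pb idag) x ∂ρ)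
    (S : Set 𝒳) (hS : MeasurableSet S)
    (p γ : ℝ) (hp : 0 < p) (hp1 : p ≤ 1) (hγ : 0 < γ)
    (hρS : ENNReal.ofReal p ≤ ρ S)
    (hmargin : ∀ x ∈ S, μ (Pb idag) x + γ ≤ M x)
    (hcond : ε < (p * γ / (2 ^ (α + 1) * c₀)) ^ (1 / (α + 1))) :
    Finset.univ.sup' (Finset.univ_nonempty_iff.mpr ⟨⟨0, hN⟩⟩)
        (fun i => ∫ x, μ (Pb i) x ∂ρ)
      < ∫ x, μ (Phat x) x ∂ρ := by
  have hαp1 : (0:ℝ) < α + 1 := by linarith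
  set A : Set 𝒳 := {x | g x ≤ 2 * ε} with hAdef
  have hmA : MeasurableSet A := measurableSet_le hmg measurable_const
  -- pointwise bound: M x - 2ε·1_A ≤ μ(Phat x) x
  have hpt : ∀ x, M x - A.indicator (fun _ => 2 * ε) x ≤ μ (Phat x) x := by
    intro x
    obtain ⟨P₁, hP₁mem, hP₁max, hne, hgeq⟩ := hg x
    have hMx : M x = μ P₁ x := by
      rw [hM]
      exact le_antisymm (Finset.sup'_le _ _ hP₁max)
        (Finset.le_sup' (fun P => μ P x) hP₁mem)
    have h1 := abs_le.mp (herr x (Phat x) (hPhatMem x))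
    have h2 := abs_le.mp (herr x P₁ hP₁mem)
    have h3 := hPhatMax x P₁ hP₁mem
    have hlow : M x - 2 * ε ≤ μ (Phat x) x := by
      rw [hMx]; linarith [h1.1, h1.2, h2.1, h2.2]
    by_cases hgx : g x ≤ 2 * ε
    · have hxA : x ∈ A := hgx
      rw [Set.indicator_of_mem hxA]; exact hlow
    · have hxA : x ∉ A := hgx
      rw [Set.indicator_of_notMem hxA, sub_zero]
      push_neg at hgx
      by_contra hlt
      push_neg at hlt
      have hne' : Phat x ≠ P₁ := by
        rintro rfl; rw [hMx] at hlt; exact lt_irrefl _ hlt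
      have hmem' : Phat x ∈ (C x).erase P₁ := Finset.mem_erase.mpr ⟨hne', hPhatMem x⟩
      have hsup : μ (Phat x) x ≤ ((C x).erase P₁).sup' hne (fun P => μ P x) :=
        Finset.le_sup' (fun P => μ P x) hmem'
      linarith [hgeq, hlow]
  -- pointwise bound: μ(Pb idag) + γ·1_S ≤ M
  have hpt2 : ∀ x, μ (Pb idag) x + S.indicator (fun _ => γ) x ≤ M x := by
    intro x
    by_cases hx : x ∈ S
    · have : S.indicator (fun _ => γ) x = γ := Set.indicator_of_mem hx _
      rw [this]; exact hmargin x hx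
    · have : S.indicator (fun _ => γ) x = 0 := Set.indicator_of_notMem hx _
      rw [this, add_zero, hM]
      exact Finset.le_sup' (fun P => μ P x) (hbmem x idag)
  -- integrability
  have hbd : ∀ (h : 𝒳 → ℝ), Measurable h → (∀ x, 0 ≤ h x ∧ h x ≤ 1) → Integrable h ρ := by
    intro h hmh hb
    refine Integrable.mono' (integrable_const 1) hmh.aestronglyMeasurable ?_
    filter_upwards with x
    rw [Real.norm_eq_abs, abs_le]
    exact ⟨by linarith [(hb x).1], (hb x).2⟩
  have hintPhat : Integrable (fun x => μ (Phat x) x) ρ :=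
    hbd _ hmPhat (fun x => hμ (Phat x) x)
  have hMbd : ∀ x, 0 ≤ M x ∧ M x ≤ 1 := by
    intro x
    constructor
    · rw [hM]
      refine le_trans (hμ (Phat x) x).1 (Finset.le_sup' (fun P => μ P x) (hPhatMem x))
    · rw [hM]
      exact Finset.sup'_le _ _ (fun P hP => (hμ P x).2)
  have hintM : Integrable M ρ := hbd _ hmM hMbd
  have hintI : Integrable (fun x => μ (Pb idag) x) ρ :=
    hbd _ (hmb idag) (fun x => hμ (Pb idag) x)
  have hintA : Integrable (A.indicator (fun _ => 2 * ε)) ρ :=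
    (integrable_const (2 * ε)).indicator hmA
  have hintS : Integrable (S.indicator (fun _ => γ)) ρ :=
    (integrable_const γ).indicator hS
  -- integrate the two pointwise bounds
  have key1 : ∫ x, M x ∂ρ - 2 * ε * (ρ A).toReal ≤ ∫ x, μ (Phat x) x ∂ρ := by
    have := integral_mono (hintM.sub hintA) hintPhat hpt
    simp only [Pi.sub_apply] at this
    rw [integral_sub hintM hintA, integral_indicator_const _ hmA, smul_eq_mul, measureReal_def] at this
    linarith
  have key2 : ∫ x, μ (Pb idag) x ∂ρ + γ * (ρ S).toReal ≤ ∫ x, M x ∂ρ := by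
    have := integral_mono (hintI.add hintS) hintM hpt2
    simp only [Pi.add_apply] at this
    rw [integral_add hintI hintS, integral_indicator_const _ hS, smul_eq_mul, measureReal_def] at this
    linarith
  -- measure bounds
  have hρSr : p ≤ (ρ S).toReal := by
    have h1 : (ENNReal.ofReal p).toReal ≤ (ρ S).toReal :=
      ENNReal.toReal_mono (measure_ne_top ρ S) hρS
    rwa [ENNReal.toReal_ofReal hp.le] at h1
  have hρAr : (ρ A).toReal ≤ c₀ * (2 * ε) ^ α := by
    have ht := htsy (2 * ε) ⟨by linarith, hε1⟩
    have h1 : (ρ A).toReal ≤ (ENNReal.ofReal (c₀ * (2 * ε) ^ α)).toReal :=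
      ENNReal.toReal_mono ENNReal.ofReal_ne_top ht
    rwa [ENNReal.toReal_ofReal (by positivity)] at h1
  -- the key smallness: 2ε·ρ(A).toReal < pγ
  have hsmall : 2 * ε * (ρ A).toReal < p * γ := by
    rcases eq_or_lt_of_le hε with hε0 | hεpos
    · rw [← hε0]; simpa using mul_pos hp hγ
    · have hstep : 2 * ε * (ρ A).toReal ≤ 2 ^ (α + 1) * c₀ * ε ^ (α + 1) := by
        have h1 : 2 * ε * (ρ A).toReal ≤ 2 * ε * (c₀ * (2 * ε) ^ α) :=
          mul_le_mul_of_nonneg_left hρAr (by linarith)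
        have h2 : (2 * ε : ℝ) ^ α = 2 ^ α * ε ^ α :=
          Real.mul_rpow (by norm_num) hε
        have h3 : (2:ℝ) ^ (α + 1) = 2 ^ α * 2 := by
          rw [Real.rpow_add_one (by norm_num : (2:ℝ) ≠ 0)]
        have h4 : ε ^ (α + 1) = ε ^ α * ε := by
          rw [Real.rpow_add_one hεpos.ne']
        rw [h3, h4]
        calc 2 * ε * (ρ A).toReal ≤ 2 * ε * (c₀ * (2 ^ α * ε ^ α)) := by rw [← h2]; exact h1
          _ = 2 ^ α * 2 * c₀ * (ε ^ α * ε) := by ring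
      have hX : (0:ℝ) < p * γ / (2 ^ (α + 1) * c₀) := by
        apply div_pos (mul_pos hp hγ)
        exact mul_pos (Real.rpow_pos_of_pos (by norm_num) _) hc₀
      have hpow : ε ^ (α + 1) < p * γ / (2 ^ (α + 1) * c₀) := by
        have := Real.rpow_lt_rpow hε hcond hαp1
        rwa [← Real.rpow_mul hX.le, one_div_mul_cancel hαp1.ne',
          Real.rpow_one] at this
      have hden : (0:ℝ) < 2 ^ (α + 1) * c₀ :=
        mul_pos (Real.rpow_pos_of_pos (by norm_num) _) hc₀
      have : 2 ^ (α + 1) * c₀ * ε ^ (α + 1) < p * γ := by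
        rw [mul_comm]
        exact (lt_div_iff₀ hden).mp hpow
      linarith
  -- conclude
  have hfinal : ∫ x, μ (Pb idag) x ∂ρ < ∫ x, μ (Phat x) x ∂ρ := by
    have hγS : p * γ ≤ γ * (ρ S).toReal := by
      have := mul_le_mul_of_nonneg_right hρSr hγ.le
      nlinarith
    linarith
  rw [Finset.sup'_lt_iff]
  exact fun i _ => lt_of_le_of_lt (hidag i) hfinal
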